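/- Let A be a simple, undirected, connected graph on vertex set {1,…,n} with n > 1, and let P₁, P₂, … be an infinite sequence of primitive gossip matrices associated with A which is repetitively complete with period T. Then there exists a real number λ with 0 ≤ λ < 1, depending only on T and the matrices Pₜ, such that for every initial vector x(0) ∈ ℝⁿ the products Pₜ P_{t−1} ⋯ P₁ x(0) converge, as t → ∞, to y_avg·𝟙 (the constant vector whose every entry is y_avg = (1/n)·Σᵢ xᵢ(0)), and the convergence is exponentially fast: there is a constant C such that ‖Pₜ P_{t−1} ⋯ P₁ x(0) − y_avg·𝟙‖ ≤ C·λᵗ for all t. -/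

import Mathlib

open Matrix

/-- The neighborhood averaging (primitive gossip) matrix of a subset `L` of `{1,…,n}`:
entries `1/|L|` for `j, k ∈ L`, `1` on the diagonal for `j ∉ L`, and `0` elsewhere. -/
noncomputable def gossipMatrix (n : ℕ) (L : Finset (Fin n)) : Matrix (Fin n) (Fin n) ℝ :=
  Matrix.of fun j k => if j ∈ L ∧ k ∈ L then ((L.card : ℝ))⁻¹ else if j = k then 1 else 0

/-- `L` is a neighborhood of the graph `A`: a set of at least two vertices, every two
distinct elements of which are adjacent in `A` (a clique of size at least 2). -/
def IsNeighborhood {n : ℕ} (A : SimpleGraph (Fin n)) (L : Finset (Fin n)) : Prop :=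
  2 ≤ L.card ∧ ∀ i ∈ L, ∀ j ∈ L, i ≠ j → A.Adj i j

/-- The graph induced by a list `Ls` of neighborhoods: its edges are the pairs `{i,j}`
of distinct vertices lying in a common member of `Ls`. -/
def inducedGraph {n : ℕ} (Ls : List (Finset (Fin n))) : SimpleGraph (Fin n) :=
  SimpleGraph.fromRel (fun i j => ∃ L ∈ Ls, i ∈ L ∧ j ∈ L)

/-- The backward product `P_{t-1} ⋯ P_1 P_0` of the first `t` matrices of a sequence. -/
noncomputable def backProd {n : ℕ} (P : ℕ → Matrix (Fin n) (Fin n) ℝ) :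
    ℕ → Matrix (Fin n) (Fin n) ℝ
  | 0 => 1
  | t + 1 => P t * backProd P t

namespace GossipAux
variable {n : ℕ}

/-- sum of squares -/
def Q (x : Fin n → ℝ) : ℝ := ∑ i, (x i) ^ 2

lemma Q_nonneg (x : Fin n → ℝ) : 0 ≤ Q x :=
  Finset.sum_nonneg fun i _ => sq_nonneg _

lemma Q_eq_zero {x : Fin n → ℝ} (h : Q x = 0) : x = 0 := by
  funext i
  have := (Finset.sum_eq_zero_iff_of_nonneg (fun i _ => sq_nonneg (x i))).1 h i (Finset.mem_univ i)
  have := sq_eq_zero_iff.1 this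
  simpa using this

lemma gossip_mulVec (L : Finset (Fin n)) (x : Fin n → ℝ) :
    gossipMatrix n L *ᵥ x = fun j => if j ∈ L then (∑ k ∈ L, x k) / (L.card : ℝ) else x j := by
  funext j
  simp only [mulVec, dotProduct, gossipMatrix, Matrix.of_apply]
  by_cases hj : j ∈ L
  · simp only [hj, true_and, if_pos]
    have : ∀ k : Fin n, (if k ∈ L then ((L.card : ℝ))⁻¹ else if j = k then 1 else 0) * x k
        = if k ∈ L then ((L.card : ℝ))⁻¹ * x k else 0 := by
      intro k
      by_cases hk : k ∈ L
      · simp [hk]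
      · have : j ≠ k := fun h => hk (h ▸ hj)
        simp [hk, this]
    rw [Finset.sum_congr rfl fun k _ => this k]
    rw [Finset.sum_ite_mem, Finset.univ_inter, ← Finset.mul_sum]
    rw [div_eq_inv_mul]
  · have : ∀ k : Fin n, (if j ∈ L ∧ k ∈ L then ((L.card : ℝ))⁻¹ else if j = k then 1 else 0) * x k
        = if j = k then x k else 0 := by
      intro k
      simp only [hj, false_and, if_false]
      by_cases h : j = k <;> simp [h]
    rw [Finset.sum_congr rfl fun k _ => this k]
    simp [hj, Finset.sum_ite_eq]

end GossipAux

namespace GossipAux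
variable {n : ℕ}

lemma sum_ite_split (L : Finset (Fin n)) (f g : Fin n → ℝ) :
    ∑ j, (if j ∈ L then f j else g j) = ∑ j ∈ L, f j + ∑ j ∈ Lᶜ, g j := by
  rw [Finset.sum_ite]
  congr 1
  · congr 1; ext j; simp
  · congr 1; ext j; simp

lemma gossip_sum (L : Finset (Fin n)) (hL : 0 < L.card) (x : Fin n → ℝ) :
    ∑ j, (gossipMatrix n L *ᵥ x) j = ∑ j, x j := by
  rw [gossip_mulVec]
  rw [sum_ite_split]
  have hsum : ∑ j ∈ L, (∑ k ∈ L, x k) / (L.card : ℝ) = ∑ k ∈ L, x k := by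
    rw [Finset.sum_const, nsmul_eq_mul]
    field_simp
  rw [hsum]
  have := (Finset.sum_compl_add_sum L x)
  linarith [Finset.sum_compl_add_sum L x]

end GossipAux

namespace GossipAux
variable {n : ℕ}

lemma gossip_Q_drop (L : Finset (Fin n)) (hL : 0 < L.card) (x : Fin n → ℝ) :
    Q x - Q (gossipMatrix n L *ᵥ x)
      = ∑ j ∈ L, (x j - (∑ k ∈ L, x k) / (L.card : ℝ)) ^ 2 := by
  set a : ℝ := (∑ k ∈ L, x k) / (L.card : ℝ) with ha
  have hm : ((L.card : ℝ)) ≠ 0 := by positivity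
  have hma : (L.card : ℝ) * a = ∑ k ∈ L, x k := by
    rw [ha]; field_simp
  have hQy : Q (gossipMatrix n L *ᵥ x) = (∑ j ∈ L, a ^ 2) + ∑ j ∈ Lᶜ, (x j) ^ 2 := by
    rw [gossip_mulVec]
    unfold Q
    have : ∀ j ∈ Finset.univ, ((fun j => if j ∈ L then a else x j) j) ^ 2
        = if j ∈ L then a ^ 2 else (x j) ^ 2 := by
      intro j _; by_cases h : j ∈ L <;> simp [h, ha]
    rw [Finset.sum_congr rfl this, sum_ite_split]
  have hQx : Q x = (∑ j ∈ L, (x j) ^ 2) + ∑ j ∈ Lᶜ, (x j) ^ 2 := by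
    unfold Q
    rw [← Finset.sum_compl_add_sum L]
    ring
  have hrhs : ∑ j ∈ L, (x j - a) ^ 2
      = (∑ j ∈ L, (x j) ^ 2) - 2 * a * (∑ k ∈ L, x k) + (L.card : ℝ) * a ^ 2 := by
    have : ∀ j ∈ L, (x j - a) ^ 2 = (x j) ^ 2 - 2 * a * x j + a ^ 2 := fun j _ => by ring
    rw [Finset.sum_congr rfl this]
    rw [Finset.sum_add_distrib, Finset.sum_sub_distrib, Finset.sum_const, nsmul_eq_mul,
      ← Finset.mul_sum]
  have hconst : ∑ j ∈ L, a ^ 2 = (L.card : ℝ) * a ^ 2 := by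
    rw [Finset.sum_const, nsmul_eq_mul]
  rw [hQx, hQy, hrhs, hconst]
  linear_combination (-2 * a) * hma

end GossipAux

namespace GossipAux
variable {n : ℕ}

lemma gossip_Q_le (L : Finset (Fin n)) (hL : 0 < L.card) (x : Fin n → ℝ) :
    Q (gossipMatrix n L *ᵥ x) ≤ Q x := by
  have h := gossip_Q_drop L hL x
  have h2 : 0 ≤ ∑ j ∈ L, (x j - (∑ k ∈ L, x k) / (L.card : ℝ)) ^ 2 :=
    Finset.sum_nonneg fun j _ => sq_nonneg _
  linarith

lemma gossip_Q_eq (L : Finset (Fin n)) (hL : 0 < L.card) (x : Fin n → ℝ)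
    (h : Q (gossipMatrix n L *ᵥ x) = Q x) :
    gossipMatrix n L *ᵥ x = x ∧ ∀ j ∈ L, ∀ k ∈ L, x j = x k := by
  have hd := gossip_Q_drop L hL x
  rw [h, sub_self] at hd
  have hz : ∀ j ∈ L, (x j - (∑ k ∈ L, x k) / (L.card : ℝ)) ^ 2 = 0 :=
    (Finset.sum_eq_zero_iff_of_nonneg fun j _ => sq_nonneg _).1 hd.symm
  have hx : ∀ j ∈ L, x j = (∑ k ∈ L, x k) / (L.card : ℝ) := by
    intro j hj
    have := sq_eq_zero_iff.1 (hz j hj)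
    linarith [sub_eq_zero.1 this]
  constructor
  · rw [gossip_mulVec]
    funext j
    by_cases hj : j ∈ L
    · simp only [hj, if_pos]
      exact (hx j hj).symm
    · simp [hj]
  · intro j hj k hk
    rw [hx j hj, hx k hk]

lemma gossip_const (L : Finset (Fin n)) (hL : 0 < L.card) (c : ℝ) :
    gossipMatrix n L *ᵥ (fun _ => c) = fun _ => c := by
  rw [gossip_mulVec]
  funext j
  by_cases hj : j ∈ L
  · have hm : ((L.card : ℝ)) ≠ 0 := by positivity
    simp only [hj, if_pos, Finset.sum_const, nsmul_eq_mul]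
    field_simp
  · simp [hj]

end GossipAux

namespace GossipAux
variable {n : ℕ}

lemma list_mulVec (L : Finset (Fin n)) (l : List (Finset (Fin n))) (x : Fin n → ℝ) :
    ((L :: l).map (gossipMatrix n)).prod *ᵥ x
      = gossipMatrix n L *ᵥ ((l.map (gossipMatrix n)).prod *ᵥ x) := by
  rw [List.map_cons, List.prod_cons, Matrix.mulVec_mulVec]

lemma list_sum (l : List (Finset (Fin n))) (hl : ∀ L ∈ l, 0 < L.card) (x : Fin n → ℝ) :
    ∑ j, ((l.map (gossipMatrix n)).prod *ᵥ x) j = ∑ j, x j := by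
  induction l with
  | nil => simp
  | cons L l ih =>
    rw [list_mulVec, gossip_sum L (hl L (List.mem_cons_self)),
      ih fun L' hL' => hl L' (List.mem_cons_of_mem _ hL')]

lemma list_Q_le (l : List (Finset (Fin n))) (hl : ∀ L ∈ l, 0 < L.card) (x : Fin n → ℝ) :
    Q ((l.map (gossipMatrix n)).prod *ᵥ x) ≤ Q x := by
  induction l with
  | nil => simp
  | cons L l ih =>
    rw [list_mulVec]
    exact le_trans (gossip_Q_le L (hl L (List.mem_cons_self)) _)
      (ih fun L' hL' => hl L' (List.mem_cons_of_mem _ hL'))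

lemma list_Q_eq (l : List (Finset (Fin n))) (hl : ∀ L ∈ l, 0 < L.card) (x : Fin n → ℝ)
    (h : Q ((l.map (gossipMatrix n)).prod *ᵥ x) = Q x) :
    (l.map (gossipMatrix n)).prod *ᵥ x = x ∧
      ∀ L ∈ l, ∀ j ∈ L, ∀ k ∈ L, x j = x k := by
  induction l with
  | nil => simpa using fun L h => absurd h (List.not_mem_nil L)
  | cons L l ih =>
    have hL := hl L (List.mem_cons_self)
    have hl' : ∀ L' ∈ l, 0 < L'.card := fun L' hL' => hl L' (List.mem_cons_of_mem _ hL')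
    rw [list_mulVec] at h
    set y := (l.map (gossipMatrix n)).prod *ᵥ x with hy
    have h1 : Q y ≤ Q x := list_Q_le l hl' x
    have h2 : Q (gossipMatrix n L *ᵥ y) ≤ Q y := gossip_Q_le L hL y
    have hQy : Q y = Q x := le_antisymm h1 (by rw [← h]; exact h2)
    obtain ⟨hyx, hconst⟩ := ih hl' hQy
    rw [hyx] at h
    obtain ⟨hfix, hcL⟩ := gossip_Q_eq L hL x h
    rw [list_mulVec, ← hy, hyx, hfix]
    refine ⟨rfl, fun L' hL' => ?_⟩
    rcases List.mem_cons.1 hL' with h' | h'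
    · exact h' ▸ hcL
    · exact hconst L' h'

lemma list_const (l : List (Finset (Fin n))) (hl : ∀ L ∈ l, 0 < L.card) (c : ℝ) :
    (l.map (gossipMatrix n)).prod *ᵥ (fun _ => c) = fun _ => c := by
  induction l with
  | nil => simp
  | cons L l ih =>
    rw [list_mulVec, ih fun L' hL' => hl L' (List.mem_cons_of_mem _ hL'),
      gossip_const L (hl L (List.mem_cons_self))]

end GossipAux

namespace GossipAux
variable {n : ℕ}

lemma backProd_mulVec (f : ℕ → Matrix (Fin n) (Fin n) ℝ) (k : ℕ) (x : Fin n → ℝ) :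
    backProd f (k + 1) *ᵥ x = f k *ᵥ (backProd f k *ᵥ x) := by
  show (f k * backProd f k) *ᵥ x = _
  rw [Matrix.mulVec_mulVec]

lemma backProd_add (f : ℕ → Matrix (Fin n) (Fin n) ℝ) (a k : ℕ) :
    backProd f (a + k) = backProd (fun i => f (a + i)) k * backProd f a := by
  induction k with
  | zero => simp [backProd]
  | succ k ih =>
    show f (a + k) * backProd f (a + k) = (f (a + k) * backProd (fun i => f (a + i)) k) * _
    rw [ih, Matrix.mul_assoc]

lemma backProd_congr {f g : ℕ → Matrix (Fin n) (Fin n) ℝ} (k : ℕ)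
    (h : ∀ i < k, f i = g i) : backProd f k = backProd g k := by
  induction k with
  | zero => rfl
  | succ k ih =>
    show f k * backProd f k = g k * backProd g k
    rw [h k (Nat.lt_succ_self k), ih fun i hi => h i (Nat.lt_succ_of_lt hi)]

section Applied
variable (f : ℕ → Matrix (Fin n) (Fin n) ℝ) (ls : ℕ → List (Finset (Fin n))) (k : ℕ)

lemma backProd_sum (hf : ∀ i < k, f i = ((ls i).map (gossipMatrix n)).prod)
    (hc : ∀ i < k, ∀ L ∈ ls i, 0 < L.card) (x : Fin n → ℝ) :
    ∑ j, (backProd f k *ᵥ x) j = ∑ j, x j := by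
  induction k with
  | zero => simp [backProd]
  | succ k ih =>
    rw [backProd_mulVec, hf k (Nat.lt_succ_self k),
      list_sum _ (hc k (Nat.lt_succ_self k)) _,
      ih (fun i hi => hf i (Nat.lt_succ_of_lt hi)) fun i hi => hc i (Nat.lt_succ_of_lt hi)]

lemma backProd_Q_le (hf : ∀ i < k, f i = ((ls i).map (gossipMatrix n)).prod)
    (hc : ∀ i < k, ∀ L ∈ ls i, 0 < L.card) (x : Fin n → ℝ) :
    Q (backProd f k *ᵥ x) ≤ Q x := by
  induction k with
  | zero => simp [backProd]
  | succ k ih =>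
    rw [backProd_mulVec, hf k (Nat.lt_succ_self k)]
    exact le_trans (list_Q_le _ (hc k (Nat.lt_succ_self k)) _)
      (ih (fun i hi => hf i (Nat.lt_succ_of_lt hi)) fun i hi => hc i (Nat.lt_succ_of_lt hi))

lemma backProd_fix (hf : ∀ i < k, f i = ((ls i).map (gossipMatrix n)).prod)
    (hc : ∀ i < k, ∀ L ∈ ls i, 0 < L.card) (x : Fin n → ℝ)
    (h : Q (backProd f k *ᵥ x) = Q x) : backProd f k *ᵥ x = x := by
  induction k with
  | zero => simp [backProd]
  | succ k ih =>
    have hf' : ∀ i < k, f i = ((ls i).map (gossipMatrix n)).prod :=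
      fun i hi => hf i (Nat.lt_succ_of_lt hi)
    have hc' : ∀ i < k, ∀ L ∈ ls i, 0 < L.card := fun i hi => hc i (Nat.lt_succ_of_lt hi)
    rw [backProd_mulVec, hf k (Nat.lt_succ_self k)] at h ⊢
    have h1 : Q (backProd f k *ᵥ x) ≤ Q x := backProd_Q_le f ls k hf' hc' x
    have h2 : Q (((ls k).map (gossipMatrix n)).prod *ᵥ (backProd f k *ᵥ x))
        ≤ Q (backProd f k *ᵥ x) := list_Q_le _ (hc k (Nat.lt_succ_self k)) _
    have hQy : Q (backProd f k *ᵥ x) = Q x := le_antisymm h1 (by rw [← h]; exact h2)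
    have hyx := ih hf' hc' hQy
    rw [hyx] at h ⊢
    exact (list_Q_eq _ (hc k (Nat.lt_succ_self k)) x h).1

lemma backProd_Q_eq (hf : ∀ i < k, f i = ((ls i).map (gossipMatrix n)).prod)
    (hc : ∀ i < k, ∀ L ∈ ls i, 0 < L.card) (x : Fin n → ℝ)
    (h : Q (backProd f k *ᵥ x) = Q x) :
    ∀ i < k, ∀ L ∈ ls i, ∀ j ∈ L, ∀ j' ∈ L, x j = x j' := by
  induction k with
  | zero => exact fun i hi => absurd hi (Nat.not_lt_zero i)
  | succ k ih =>
    have hf' : ∀ i < k, f i = ((ls i).map (gossipMatrix n)).prod :=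
      fun i hi => hf i (Nat.lt_succ_of_lt hi)
    have hc' : ∀ i < k, ∀ L ∈ ls i, 0 < L.card := fun i hi => hc i (Nat.lt_succ_of_lt hi)
    rw [backProd_mulVec, hf k (Nat.lt_succ_self k)] at h
    set y := backProd f k *ᵥ x with hy
    have h1 : Q y ≤ Q x := backProd_Q_le f ls k hf' hc' x
    have h2 : Q (((ls k).map (gossipMatrix n)).prod *ᵥ y) ≤ Q y :=
      list_Q_le _ (hc k (Nat.lt_succ_self k)) y
    have hQy : Q y = Q x := le_antisymm h1 (by rw [← h]; exact h2)
    have hky := ih hf' hc' hQy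
    -- y = x : need equality case applied to the prefix
    have hyx : y = x := backProd_fix f ls k hf' hc' x hQy
    rw [hyx] at h
    obtain ⟨_, hcL⟩ := list_Q_eq _ (hc k (Nat.lt_succ_self k)) x h
    intro i hi
    rcases Nat.lt_succ_iff_lt_or_eq.1 hi with h' | h'
    · exact hky i h'
    · exact h' ▸ hcL

end Applied
end GossipAux

namespace GossipAux
variable {n : ℕ}

lemma backProd_const (f : ℕ → Matrix (Fin n) (Fin n) ℝ) (ls : ℕ → List (Finset (Fin n)))
    (k : ℕ) (hf : ∀ i < k, f i = ((ls i).map (gossipMatrix n)).prod)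
    (hc : ∀ i < k, ∀ L ∈ ls i, 0 < L.card) (c : ℝ) :
    backProd f k *ᵥ (fun _ => c) = fun _ => c := by
  induction k with
  | zero => simp [backProd]
  | succ k ih =>
    rw [backProd_mulVec,
      ih (fun i hi => hf i (Nat.lt_succ_of_lt hi)) (fun i hi => hc i (Nat.lt_succ_of_lt hi)),
      hf k (Nat.lt_succ_self k), list_const _ (hc k (Nat.lt_succ_self k))]

lemma const_of_connected {G : SimpleGraph (Fin n)} (hG : G.Connected) (x : Fin n → ℝ)
    (h : ∀ i j, G.Adj i j → x i = x j) : ∀ i j, x i = x j := by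
  have key : ∀ {i j : Fin n}, G.Walk i j → x i = x j := by
    intro i j w
    induction w with
    | nil => rfl
    | cons hadj _ ih => exact (h _ _ hadj).trans ih
  intro i j
  obtain ⟨w⟩ := hG.preconnected i j
  exact key w

lemma Q_smul (c : ℝ) (x : Fin n → ℝ) : Q (c • x) = c ^ 2 * Q x := by
  unfold Q
  rw [Finset.mul_sum]
  exact Finset.sum_congr rfl fun i _ => by rw [Pi.smul_apply, smul_eq_mul, mul_pow]

lemma Q_zero : Q (0 : Fin n → ℝ) = 0 := by simp [Q]

lemma sum_smul' (c : ℝ) (x : Fin n → ℝ) : ∑ i, (c • x) i = c * ∑ i, x i := by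
  rw [Finset.mul_sum]; exact Finset.sum_congr rfl fun i _ => rfl

/-- compactness: uniform contraction factor for a single strictly-contracting matrix -/
lemma exists_kappa (M : Matrix (Fin n) (Fin n) ℝ)
    (h2 : ∀ x : Fin n → ℝ, (∑ i, x i) = 0 → x ≠ 0 → Q (M *ᵥ x) < Q x) :
    ∃ κ : ℝ, 0 ≤ κ ∧ κ < 1 ∧
      ∀ x : Fin n → ℝ, (∑ i, x i) = 0 → Q (M *ᵥ x) ≤ κ * Q x := by
  classical
  set K : Set (Fin n → ℝ) := {x | (∑ i, x i) = 0 ∧ Q x = 1} with hK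
  by_cases hne : K.Nonempty
  · -- compactness
    have hQcont : Continuous fun x : Fin n → ℝ => Q x := by
      unfold Q; fun_prop
    have hfcont : Continuous fun x : Fin n → ℝ => Q (M *ᵥ x) := by
      unfold Q Matrix.mulVec dotProduct; fun_prop
    have hclosed : IsClosed K := by
      apply IsClosed.inter
      · exact isClosed_eq (by fun_prop) continuous_const
      · exact isClosed_eq hQcont continuous_const
    have hbdd : Bornology.IsBounded K := by
      apply Bornology.IsBounded.subset (Metric.isBounded_closedBall (x := (0 : Fin n → ℝ)) (r := 1))
      intro x hx
      rw [Metric.mem_closedBall, dist_zero_right]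
      rw [pi_norm_le_iff_of_nonneg zero_le_one]
      intro i
      have h1 : (x i) ^ 2 ≤ Q x := by
        unfold Q
        exact Finset.single_le_sum (fun j _ => sq_nonneg (x j)) (Finset.mem_univ i)
      rw [hx.2] at h1
      rw [Real.norm_eq_abs, ← Real.sqrt_one, ← Real.sqrt_sq_eq_abs]
      exact Real.sqrt_le_sqrt h1
    have hcompact : IsCompact K := Metric.isCompact_of_isClosed_isBounded hclosed hbdd
    obtain ⟨x₀, hx₀K, hx₀max⟩ := hcompact.exists_isMaxOn hne hfcont.continuousOn
    set κ := Q (M *ᵥ x₀) with hκ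
    have hx₀ne : x₀ ≠ 0 := by
      intro h0
      rw [h0] at hx₀K
      have := hx₀K.2
      rw [Q_zero] at this
      exact absurd this (by norm_num)
    have hκ1 : κ < 1 := by
      have := h2 x₀ hx₀K.1 hx₀ne
      rw [hx₀K.2] at this
      exact this
    refine ⟨κ, Q_nonneg _, hκ1, ?_⟩
    intro x hxs
    by_cases hx0 : x = 0
    · subst hx0
      rw [Matrix.mulVec_zero, Q_zero]
      simp
    · have hQx : 0 < Q x := by
        rcases lt_or_eq_of_le (Q_nonneg x) with h | h
        · exact h
        · exact absurd (Q_eq_zero h.symm) hx0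
      set c : ℝ := (Real.sqrt (Q x))⁻¹ with hc
      have hsq : Real.sqrt (Q x) > 0 := Real.sqrt_pos.2 hQx
      have hc2 : c ^ 2 * Q x = 1 := by
        rw [hc, inv_pow, Real.sq_sqrt (le_of_lt hQx)]
        field_simp
      have hmem : c • x ∈ K := by
        constructor
        · rw [sum_smul' c x, hxs, mul_zero]
        · rw [Q_smul, hc2]
      have h3 : Q (M *ᵥ (c • x)) ≤ κ := hx₀max hmem
      rw [Matrix.mulVec_smul, Q_smul] at h3
      -- this : c^2 * Q (M *ᵥ x) ≤ κ
      have hc2pos : 0 < c ^ 2 := by positivity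
      calc Q (M *ᵥ x) = (c ^ 2 * Q (M *ᵥ x)) * Q x := by
            rw [mul_comm (c ^ 2) _, mul_assoc, hc2, mul_one]
        _ ≤ κ * Q x := by
            apply mul_le_mul_of_nonneg_right _ (le_of_lt hQx)
            exact h3
  · -- K empty: every zero-sum vector is 0
    refine ⟨0, le_refl 0, zero_lt_one, ?_⟩
    intro x hxs
    by_cases hx0 : x = 0
    · subst hx0; rw [Matrix.mulVec_zero, Q_zero]; simp
    · exfalso
      have hQx : 0 < Q x := by
        rcases lt_or_eq_of_le (Q_nonneg x) with h | h
        · exact h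
        · exact absurd (Q_eq_zero h.symm) hx0
      set c : ℝ := (Real.sqrt (Q x))⁻¹ with hc
      have hsq : Real.sqrt (Q x) > 0 := Real.sqrt_pos.2 hQx
      have hc2 : c ^ 2 * Q x = 1 := by
        rw [hc, inv_pow, Real.sq_sqrt (le_of_lt hQx)]
        field_simp
      apply hne
      refine ⟨c • x, ?_, ?_⟩
      · rw [sum_smul' c x, hxs, mul_zero]
      · rw [Q_smul, hc2]

end GossipAux

namespace GossipAux
variable {n : ℕ}
lemma norm_le_sqrt_Q (v : Fin n → ℝ) : ‖v‖ ≤ Real.sqrt (Q v) := by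
  rw [pi_norm_le_iff_of_nonneg (Real.sqrt_nonneg _)]
  intro i
  rw [Real.norm_eq_abs, ← Real.sqrt_sq_eq_abs]
  exact Real.sqrt_le_sqrt (Finset.single_le_sum (fun j _ => sq_nonneg (v j)) (Finset.mem_univ i))
end GossipAux

open GossipAux in
/-- Theorem 1 of the paper: if `P 0, P 1, P 2, …` is an infinite sequence of primitive
gossip matrices of the connected graph `A` (each `P t` being the product of the
neighborhood averaging matrices of a pairwise-disjoint list `Ls t` of neighborhoods of
`A`) which is repetitively complete with period `T` (the union over every window of `T`
consecutive steps of the induced graphs is a connected spanning subgraph of `A`), then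
there is `0 ≤ λ < 1`, depending only on `T` and the matrices `P t`, such that for every
initial vector `x₀` the products `P_t ⋯ P_1 x₀` converge to `y_avg·𝟙` exponentially
fast, at the rate `λᵗ`. -/
theorem repetitively_complete_gossip_converges {n : ℕ} (hn : 1 < n)
    (A : SimpleGraph (Fin n)) (hA : A.Connected)
    (T : ℕ) (hT : 0 < T)
    (Ls : ℕ → List (Finset (Fin n)))
    (hnbhd : ∀ t : ℕ, ∀ L ∈ Ls t, IsNeighborhood A L)
    (hdisj : ∀ t : ℕ, (Ls t).Pairwise (fun L L' => Disjoint L L'))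
    (P : ℕ → Matrix (Fin n) (Fin n) ℝ)
    (hP : ∀ t : ℕ, P t = ((Ls t).map (gossipMatrix n)).prod)
    (hcomplete : ∀ t : ℕ,
      (⨆ s ∈ Finset.Ico t (t + T), inducedGraph (Ls s)).Connected) :
    ∃ lam : ℝ, 0 ≤ lam ∧ lam < 1 ∧
      ∀ x₀ : Fin n → ℝ, ∃ C : ℝ,
        ∀ t : ℕ,
          ‖backProd P t *ᵥ x₀ - (fun _ => (∑ i : Fin n, x₀ i) / (n : ℝ))‖ ≤
            C * lam ^ t := by
  classical
  have hcard : ∀ t, ∀ L ∈ Ls t, 0 < L.card :=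
    fun t L hL => lt_of_lt_of_le (by norm_num) (hnbhd t L hL).1
  -- the window products
  set W : ℕ → Matrix (Fin n) (Fin n) ℝ := fun t => backProd (fun i => P (t + i)) T with hW
  -- strict contraction of each window on zero-sum vectors
  have hstrictW : ∀ t, ∀ x : Fin n → ℝ, (∑ i, x i) = 0 → x ≠ 0 → Q (W t *ᵥ x) < Q x := by
    intro t x hxs hx0
    have hf : ∀ i < T, P (t + i) = ((Ls (t + i)).map (gossipMatrix n)).prod :=
      fun i _ => hP (t + i)
    have hc : ∀ i < T, ∀ L ∈ Ls (t + i), 0 < L.card := fun i _ => hcard (t + i)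
    rcases lt_or_eq_of_le (backProd_Q_le _ (fun i => Ls (t + i)) T hf hc x) with h | h
    · exact h
    · exfalso
      have hconst := backProd_Q_eq _ (fun i => Ls (t + i)) T hf hc x h
      -- x is constant on the connected union graph
      have hadj : ∀ i j, (⨆ s ∈ Finset.Ico t (t + T), inducedGraph (Ls s)).Adj i j →
          x i = x j := by
        intro i j hij
        simp only [SimpleGraph.iSup_adj] at hij
        obtain ⟨s, hs, hadj⟩ := hij
        rw [Finset.mem_Ico] at hs
        have hs' : s = t + (s - t) := by omega
        have hlt : s - t < T := by omega
        rw [inducedGraph, SimpleGraph.fromRel_adj] at hadj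
        rcases hadj.2 with ⟨L, hL, hiL, hjL⟩ | ⟨L, hL, hjL, hiL⟩ <;>
        · have hL' : L ∈ Ls (t + (s - t)) := by rw [← hs']; exact hL
          exact hconst (s - t) hlt L hL' i hiL j hjL
      have hcst := const_of_connected (hcomplete t) x hadj
      -- then x is a constant vector with zero sum, hence zero
      apply hx0
      funext i
      have : ∀ j, x j = x i := fun j => hcst j i
      have hsum : (n : ℝ) * x i = 0 := by
        rw [← hxs]
        rw [Finset.sum_congr rfl fun j _ => this j, Finset.sum_const, Finset.card_univ,
          Fintype.card_fin, nsmul_eq_mul]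
      have hn0 : (n : ℝ) ≠ 0 := by positivity
      have := mul_eq_zero.1 hsum
      simpa [hn0] using this
  -- finiteness of the set of window matrices
  have hLsnodup : ∀ t, (Ls t).Nodup := by
    intro t
    apply List.Pairwise.imp_of_mem _ (hdisj t)
    intro L L' hL hL' hdis heq
    subst heq
    have h0 : L = ∅ := disjoint_self.1 hdis
    have := hcard t L hL
    rw [h0] at this
    simp at this
  have hrangeP : (Set.range P).Finite := by
    have hsub : Set.range P ⊆ (fun l : List (Finset (Fin n)) => (l.map (gossipMatrix n)).prod) ''
        {l : List (Finset (Fin n)) | l.length ≤ Fintype.card (Finset (Fin n))} := by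
      rintro _ ⟨t, rfl⟩
      exact ⟨Ls t, (hLsnodup t).length_le_card, (hP t).symm⟩
    exact ((List.finite_length_le _ _).image _).subset hsub
  have hrangeW : (Set.range W).Finite := by
    set F : (Fin T → Matrix (Fin n) (Fin n) ℝ) → Matrix (Fin n) (Fin n) ℝ :=
      fun g => backProd (fun i => if h : i < T then g ⟨i, h⟩ else 1) T with hF
    set E : ℕ → (Fin T → Matrix (Fin n) (Fin n) ℝ) := fun t i => P (t + i.1) with hE
    have hWF : ∀ t, W t = F (E t) := by
      intro t
      apply backProd_congr
      intro i hi
      simp only [hF, hE]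
      rw [dif_pos hi]
    have hrangeE : (Set.range E).Finite := by
      apply Set.Finite.subset (Set.Finite.pi fun _ : Fin T => hrangeP)
      rintro _ ⟨t, rfl⟩ i _
      exact ⟨t + i.1, rfl⟩
    have hsub : Set.range W ⊆ F '' Set.range E := by
      rintro _ ⟨t, rfl⟩
      exact ⟨E t, ⟨t, rfl⟩, (hWF t).symm⟩
    exact (hrangeE.image F).subset hsub
  -- a uniform contraction factor over all windows
  have hMprop : ∀ M ∈ Set.range W, ∃ κ : ℝ, 0 ≤ κ ∧ κ < 1 ∧
      ∀ x : Fin n → ℝ, (∑ i, x i) = 0 → Q (M *ᵥ x) ≤ κ * Q x := by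
    rintro M ⟨t, rfl⟩
    exact exists_kappa (W t) (hstrictW t)
  choose κf hκ0 hκ1 hκ2 using hMprop
  have hmemFs : ∀ t, W t ∈ hrangeW.toFinset := fun t => hrangeW.mem_toFinset.2 ⟨t, rfl⟩
  have hattne : hrangeW.toFinset.attach.Nonempty :=
    Finset.attach_nonempty_iff.2 ⟨W 0, hmemFs 0⟩
  set κ : ℝ := hrangeW.toFinset.attach.sup' hattne
    (fun m => κf m.1 (hrangeW.mem_toFinset.1 m.2)) with hκ
  have hκlt1 : κ < 1 := by
    rw [hκ, Finset.sup'_lt_iff]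
    intro m _
    exact hκ1 _ _
  have hκge : ∀ t, κf (W t) ⟨t, rfl⟩ ≤ κ := by
    intro t
    rw [hκ]
    exact Finset.le_sup' (fun m => κf m.1 (hrangeW.mem_toFinset.1 m.2))
      (Finset.mem_attach _ ⟨W t, hmemFs t⟩)
  have hκnn : 0 ≤ κ := le_trans (hκ0 (W 0) ⟨0, rfl⟩) (hκge 0)
  have hWcontr : ∀ t, ∀ x : Fin n → ℝ, (∑ i, x i) = 0 → Q (W t *ᵥ x) ≤ κ * Q x := by
    intro t x hx
    calc Q (W t *ᵥ x) ≤ κf (W t) ⟨t, rfl⟩ * Q x := hκ2 _ _ x hx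
      _ ≤ κ * Q x := mul_le_mul_of_nonneg_right (hκge t) (Q_nonneg x)
  -- the rate
  set μ : ℝ := max κ (1/4) with hμ
  have hμ0 : (0:ℝ) ≤ μ := le_trans (by norm_num) (le_max_right _ _)
  have hμ1 : μ < 1 := max_lt hκlt1 (by norm_num)
  have hκμ : κ ≤ μ := le_max_left _ _
  set ν : ℝ := Real.sqrt μ with hν
  have hν0 : 0 < ν := Real.sqrt_pos.2 (lt_of_lt_of_le (by norm_num) (le_max_right _ _))
  have hν1 : ν < 1 := by
    rw [hν, ← Real.sqrt_one]
    exact (Real.sqrt_lt_sqrt_iff hμ0).2 hμ1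
  have hνhalf : (1/2 : ℝ) ≤ ν := by
    rw [hν]
    have h12 : (1/2 : ℝ) = Real.sqrt (1/4) := by
      rw [show (1/4:ℝ) = (1/2)^2 by norm_num, Real.sqrt_sq (by norm_num)]
    rw [h12]
    exact Real.sqrt_le_sqrt (le_max_right _ _)
  have hTpos : (0:ℝ) < T := by exact_mod_cast hT
  refine ⟨ν ^ ((T : ℝ)⁻¹), Real.rpow_nonneg hν0.le _,
    Real.rpow_lt_one hν0.le hν1 (inv_pos.2 hTpos), ?_⟩
  intro x₀
  set a : ℝ := (∑ i, x₀ i) / (n : ℝ) with ha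
  set y : Fin n → ℝ := x₀ - (fun _ => a) with hy
  have hn0 : (n : ℝ) ≠ 0 := by positivity
  have hysum : (∑ i, y i) = 0 := by
    simp only [hy, Pi.sub_apply]
    rw [Finset.sum_sub_distrib, Finset.sum_const, Finset.card_univ, Fintype.card_fin,
      nsmul_eq_mul, ha]
    field_simp
    ring
  refine ⟨2 * Real.sqrt (Q y), ?_⟩
  intro t
  have hdiff : backProd P t *ᵥ x₀ - (fun _ => a) = backProd P t *ᵥ y := by
    rw [hy, Matrix.mulVec_sub,
      backProd_const P Ls t (fun i _ => hP i) (fun i _ => hcard i) a]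
  rw [hdiff]
  -- the iteration over full windows
  have hiter : ∀ q : ℕ, Q (backProd P (T * q) *ᵥ y) ≤ κ ^ q * Q y ∧
      (∑ j, (backProd P (T * q) *ᵥ y) j) = 0 := by
    intro q
    induction q with
    | zero =>
      constructor
      · rw [Nat.mul_zero]
        show Q ((1 : Matrix (Fin n) (Fin n) ℝ) *ᵥ y) ≤ κ ^ 0 * Q y
        rw [Matrix.one_mulVec, pow_zero, one_mul]
      · rw [Nat.mul_zero]
        show ∑ j, ((1 : Matrix (Fin n) (Fin n) ℝ) *ᵥ y) j = 0
        rw [Matrix.one_mulVec]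
        exact hysum
    | succ q ih =>
      have hTq : T * (q + 1) = T * q + T := by ring
      have hsplit : backProd P (T * (q + 1)) = W (T * q) * backProd P (T * q) := by
        rw [hTq, backProd_add]
      rw [hsplit, ← Matrix.mulVec_mulVec]
      constructor
      · calc Q (W (T * q) *ᵥ (backProd P (T * q) *ᵥ y))
            ≤ κ * Q (backProd P (T * q) *ᵥ y) := hWcontr _ _ ih.2
          _ ≤ κ * (κ ^ q * Q y) := mul_le_mul_of_nonneg_left ih.1 hκnn
          _ = κ ^ (q + 1) * Q y := by ring
      · simp only [hW]
        rw [backProd_sum (fun i => P (T * q + i)) (fun i => Ls (T * q + i)) T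
          (fun i _ => hP _) (fun i _ => hcard _)]
        exact ih.2
  -- decompose t = T*q + r
  set q := t / T with hq
  set r := t % T with hr
  have htq : t = T * q + r := (Nat.div_add_mod t T).symm
  have hrT : r < T := Nat.mod_lt t hT
  have hsplit : backProd P t = backProd (fun i => P (T * q + i)) r * backProd P (T * q) := by
    calc backProd P t = backProd P (T * q + r) := by rw [← htq]
      _ = _ := backProd_add P (T * q) r
  have hQle : Q (backProd P t *ᵥ y) ≤ κ ^ q * Q y := by
    rw [hsplit, ← Matrix.mulVec_mulVec]
    calc Q (backProd (fun i => P (T * q + i)) r *ᵥ (backProd P (T * q) *ᵥ y))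
        ≤ Q (backProd P (T * q) *ᵥ y) :=
          backProd_Q_le (fun i => P (T * q + i)) (fun i => Ls (T * q + i)) r
            (fun i _ => hP _) (fun i _ => hcard _) _
      _ ≤ κ ^ q * Q y := (hiter q).1
  have h1 : Real.sqrt (Q (backProd P t *ᵥ y)) ≤ ν ^ q * Real.sqrt (Q y) := by
    have hμν : μ = ν ^ 2 := (Real.sq_sqrt hμ0).symm
    have hb : Q (backProd P t *ᵥ y) ≤ (ν ^ q) ^ 2 * Q y := by
      calc Q (backProd P t *ᵥ y) ≤ κ ^ q * Q y := hQle
        _ ≤ μ ^ q * Q y :=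
            mul_le_mul_of_nonneg_right (pow_le_pow_left₀ hκnn hκμ q) (Q_nonneg y)
        _ = (ν ^ q) ^ 2 * Q y := by rw [hμν]; ring
    calc Real.sqrt (Q (backProd P t *ᵥ y)) ≤ Real.sqrt ((ν ^ q) ^ 2 * Q y) :=
        Real.sqrt_le_sqrt hb
      _ = ν ^ q * Real.sqrt (Q y) := by
        rw [Real.sqrt_mul (by positivity), Real.sqrt_sq (by positivity)]
  have h2 : ν ^ q ≤ 2 * (ν ^ ((T : ℝ)⁻¹)) ^ t := by
    have hlamt : (ν ^ ((T:ℝ)⁻¹)) ^ t = ν ^ ((T:ℝ)⁻¹ * t) := by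
      rw [← Real.rpow_natCast (ν ^ ((T:ℝ)⁻¹)) t, ← Real.rpow_mul hν0.le]
    have htle : t ≤ (q + 1) * T := by
      calc t = T * q + r := htq
        _ ≤ T * q + T := Nat.add_le_add_left hrT.le _
        _ = (q + 1) * T := by ring
    have hexp : (T:ℝ)⁻¹ * (t:ℝ) ≤ (q : ℝ) + 1 := by
      calc (T:ℝ)⁻¹ * (t:ℝ) = (t:ℝ) / T := by ring
        _ ≤ (q:ℝ) + 1 := by
            rw [div_le_iff₀ hTpos]
            exact_mod_cast htle
    have hmono : ν ^ ((q:ℝ) + 1) ≤ ν ^ ((T:ℝ)⁻¹ * (t:ℝ)) :=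
      Real.rpow_le_rpow_of_exponent_ge hν0 hν1.le hexp
    have hq1 : ν ^ ((q:ℝ) + 1) = ν * ν ^ q := by
      rw [show ((q:ℝ) + 1) = ((q + 1 : ℕ) : ℝ) by push_cast; ring, Real.rpow_natCast]
      ring
    have hprod : (1/2 : ℝ) * ν ^ q ≤ ν * ν ^ q :=
      mul_le_mul_of_nonneg_right hνhalf (pow_nonneg hν0.le q)
    rw [hlamt]
    linarith
  calc ‖backProd P t *ᵥ y‖ ≤ Real.sqrt (Q (backProd P t *ᵥ y)) := norm_le_sqrt_Q _
    _ ≤ ν ^ q * Real.sqrt (Q y) := h1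
    _ ≤ (2 * (ν ^ ((T : ℝ)⁻¹)) ^ t) * Real.sqrt (Q y) :=
        mul_le_mul_of_nonneg_right h2 (Real.sqrt_nonneg _)
    _ = 2 * Real.sqrt (Q y) * (ν ^ ((T : ℝ)⁻¹)) ^ t := by ring
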